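/- (Gentle measurement) Let ρ be a density matrix and E an operator with 0 ≤ E ≤ I such that Tr(Eρ) ≥ 1 − ε. Then the post-measurement state ρ' = (√E ρ √E)/Tr(Eρ) satisfies ‖ρ − ρ'‖₁ ≤ 2√ε, where ‖·‖₁ denotes the trace norm. -/

import Mathlib

open Matrix
open scoped ComplexOrder

/-- The trace norm `‖M‖₁ = Tr √(M†M)` (the sum of the singular values of `M`). -/
noncomputable def traceNorm {d : ℕ} (M : Matrix (Fin d) (Fin d) ℂ) : ℝ :=
  (((Matrix.posSemidef_conjTranspose_mul_self M).1.eigenvectorUnitary : Matrix (Fin d) (Fin d) ℂ) *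
    diagonal ((fun x : ℝ => (x : ℂ)) ∘ (Real.sqrt ∘ (Matrix.posSemidef_conjTranspose_mul_self M).1.eigenvalues)) *
    (star (Matrix.posSemidef_conjTranspose_mul_self M).1.eigenvectorUnitary :
      Matrix (Fin d) (Fin d) ℂ)).trace.re

open scoped MatrixOrder

lemma traceNorm_eq_sqrt {d : ℕ} (M : Matrix (Fin d) (Fin d) ℂ) :
    traceNorm M = (CFC.sqrt (Mᴴ * M)).trace.re := by
  have hP := Matrix.posSemidef_conjTranspose_mul_self M
  rw [CFC.sqrt_eq_cfc, cfc_nnreal_eq_real _ (Mᴴ * M), hP.1.cfc_eq]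
  unfold traceNorm Matrix.IsHermitian.cfc
  rw [Unitary.conjStarAlgAut_apply]
  congr 4
  refine congrArg (fun f : Fin d → ℂ => diagonal f) (funext fun i => ?_)
  simp [max_eq_left (hP.eigenvalues_nonneg i)]

variable {d : ℕ}

lemma trace_nonneg_of_posSemidef {M : Matrix (Fin d) (Fin d) ℂ} (hM : M.PosSemidef) :
    0 ≤ M.trace := by
  rw [Matrix.trace]
  apply Finset.sum_nonneg
  intro i _
  have := hM.2 (Finsupp.single i 1)
  simpa [dotProduct, Finsupp.sum_single_index] using this

lemma trace_mul_nonneg {A B : Matrix (Fin d) (Fin d) ℂ} (hA : A.PosSemidef)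
    (hB : B.PosSemidef) : 0 ≤ (A * B).trace := by
  have h1 : A * B = CFC.sqrt A * (CFC.sqrt A * B) := by
    rw [← mul_assoc, CFC.sqrt_mul_sqrt_self A hA.nonneg]
  rw [h1, Matrix.trace_mul_comm]
  have h2 : CFC.sqrt A * B * CFC.sqrt A = CFC.sqrt A * B * (CFC.sqrt A)ᴴ := by
    rw [(Matrix.nonneg_iff_posSemidef.mp (CFC.sqrt_nonneg A)).1.eq]
  have := hB.mul_mul_conjTranspose_same (CFC.sqrt A)
  rw [← mul_assoc] at *
  exact trace_nonneg_of_posSemidef (h2 ▸ this)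

lemma re_trace_mul_nonneg {A B : Matrix (Fin d) (Fin d) ℂ} (hA : A.PosSemidef)
    (hB : B.PosSemidef) : 0 ≤ ((A * B).trace).re := by
  have := trace_mul_nonneg hA hB
  rw [Complex.le_def] at this
  exact this.1
variable {d : ℕ}

noncomputable def mvec {d : ℕ} (M : Matrix (Fin d) (Fin d) ℂ) : EuclideanSpace ℂ (Fin d × Fin d) :=
  (WithLp.equiv 2 ((Fin d × Fin d) → ℂ)).symm fun p => M p.1 p.2

lemma trace_eq_inner (M N : Matrix (Fin d) (Fin d) ℂ) :
    (Mᴴ * N).trace = inner (𝕜 := ℂ) (mvec M) (mvec N) := by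
  rw [PiLp.inner_apply, Matrix.trace]
  simp only [Matrix.diag_apply, Matrix.mul_apply, Matrix.conjTranspose_apply]
  rw [Fintype.sum_prod_type]
  simp only [RCLike.inner_apply, starRingEnd_apply, mvec, WithLp.equiv_symm_apply, PiLp.toLp_apply]
  rw [Finset.sum_comm]
  exact Finset.sum_congr rfl fun _ _ => Finset.sum_congr rfl fun _ _ => mul_comm _ _

lemma trace_cauchy_schwarz (A B : Matrix (Fin d) (Fin d) ℂ) :
    ‖((Aᴴ * B).trace)‖ ≤
      Real.sqrt ((Aᴴ * A).trace.re) * Real.sqrt ((Bᴴ * B).trace.re) := by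
  have e1 : (Aᴴ * A).trace.re = RCLike.re (inner (𝕜 := ℂ) (mvec A) (mvec A)) := by
    rw [trace_eq_inner A A]; rfl
  have e2 : (Bᴴ * B).trace.re = RCLike.re (inner (𝕜 := ℂ) (mvec B) (mvec B)) := by
    rw [trace_eq_inner B B]; rfl
  have e3 : ‖((Aᴴ * B).trace)‖ = ‖inner (𝕜 := ℂ) (mvec A) (mvec B)‖ := by
    rw [trace_eq_inner A B]
  rw [e1, e2, e3, ← @norm_eq_sqrt_re_inner ℂ, ← @norm_eq_sqrt_re_inner ℂ]
  exact norm_inner_le_norm _ _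
variable {d : ℕ}

lemma conj_mul_conj {U : Matrix (Fin d) (Fin d) ℂ} (hU : star U * U = 1) (φ ψ : Fin d → ℂ) :
    (U * diagonal φ * star U) * (U * diagonal ψ * star U)
      = U * diagonal (φ * ψ) * star U := by
  rw [show (U * diagonal φ * star U) * (U * diagonal ψ * star U)
      = U * (diagonal φ * (star U * U) * diagonal ψ) * star U by
        simp only [mul_assoc], hU]
  rw [mul_one, diagonal_mul_diagonal]
  rfl

lemma trace_conj {U : Matrix (Fin d) (Fin d) ℂ} (hU : star U * U = 1) (φ : Fin d → ℂ) :
    (U * diagonal φ * star U).trace = ∑ i, φ i := by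
  rw [Matrix.trace_mul_comm, ← mul_assoc, hU, one_mul, Matrix.trace_diagonal]

lemma diag_real_herm (φ : Fin d → ℝ) :
    (diagonal (fun i => (φ i : ℂ))).IsHermitian := by
  apply Matrix.isHermitian_diagonal_iff.mpr
  intro i
  exact Complex.conj_ofReal (φ i)

lemma conj_psd {U : Matrix (Fin d) (Fin d) ℂ} {φ : Fin d → ℝ} (hφ : ∀ i, 0 ≤ φ i) :
    (U * diagonal (fun i => (φ i : ℂ)) * star U).PosSemidef := by
  have hD : (diagonal (fun i => (φ i : ℂ))).PosSemidef := by
    rw [Matrix.posSemidef_diagonal_iff]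
    intro i
    exact_mod_cast hφ i
  have := hD.mul_mul_conjTranspose_same U
  rwa [Matrix.star_eq_conjTranspose]

lemma conj_herm {U : Matrix (Fin d) (Fin d) ℂ} (φ : Fin d → ℝ) :
    (U * diagonal (fun i => (φ i : ℂ)) * star U).IsHermitian := by
  have := Matrix.isHermitian_mul_mul_conjTranspose U (A := diagonal (fun i => (φ i : ℂ)))
    (diag_real_herm φ)
  rwa [Matrix.star_eq_conjTranspose]

lemma traceNorm_psd {M : Matrix (Fin d) (Fin d) ℂ} (hM : M.PosSemidef) :
    traceNorm M = M.trace.re := by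
  rw [traceNorm_eq_sqrt]
  have h : M = CFC.sqrt (Mᴴ * M) := by
    apply (CFC.sqrt_unique (a := Mᴴ * M) (b := M) _ hM.nonneg).symm
    rw [hM.1.eq]
  rw [← h]

lemma star_mul_self_unitary {U : Matrix (Fin d) (Fin d) ℂ}
    (hU : U ∈ Matrix.unitaryGroup (Fin d) ℂ) : star U * U = 1 :=
  Matrix.mem_unitaryGroup_iff'.mp hU

lemma spectral' {Δ : Matrix (Fin d) (Fin d) ℂ} (hΔ : Δ.IsHermitian) :
    Δ = (hΔ.eigenvectorUnitary : Matrix (Fin d) (Fin d) ℂ)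
        * diagonal (fun i => (hΔ.eigenvalues i : ℂ))
        * star (hΔ.eigenvectorUnitary : Matrix (Fin d) (Fin d) ℂ) := by
  have h := hΔ.spectral_theorem
  rw [Unitary.conjStarAlgAut_apply] at h
  exact h

lemma traceNorm_herm {Δ : Matrix (Fin d) (Fin d) ℂ} (hΔ : Δ.IsHermitian) :
    traceNorm Δ = ∑ i, |hΔ.eigenvalues i| := by
  set V : Matrix (Fin d) (Fin d) ℂ := (hΔ.eigenvectorUnitary : Matrix (Fin d) (Fin d) ℂ)
  have hU1 : star V * V = 1 := star_mul_self_unitary hΔ.eigenvectorUnitary.2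
  set μ := hΔ.eigenvalues
  set N : Matrix (Fin d) (Fin d) ℂ := V * diagonal (fun i => ((|μ i| : ℝ) : ℂ)) * star V with hN_def
  have hN : N.PosSemidef := conj_psd (fun i => abs_nonneg (μ i))
  have hsq : N ^ 2 = Δᴴ * Δ := by
    rw [pow_two, hN_def, conj_mul_conj hU1, hΔ.eq]
    conv_rhs => rw [spectral' hΔ]
    rw [conj_mul_conj hU1]
    have habs : (fun i => ((|μ i| : ℝ) : ℂ)) * (fun i => ((|μ i| : ℝ) : ℂ))
        = (fun i => (μ i : ℂ)) * (fun i => (μ i : ℂ)) := by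
      funext i
      show ((|μ i| : ℝ) : ℂ) * ((|μ i| : ℝ) : ℂ) = (μ i : ℂ) * (μ i : ℂ)
      rw [← Complex.ofReal_mul, ← Complex.ofReal_mul, abs_mul_abs_self]
    rw [habs]
  have h := (CFC.sqrt_unique (a := Δᴴ * Δ) (b := N) (by rw [← sq]; exact hsq) hN.nonneg).symm
  rw [traceNorm_eq_sqrt]
  rw [← h, hN_def, trace_conj hU1]
  rw [← Complex.ofReal_sum]
  simp

lemma trace_PXP (P X : Matrix (Fin d) (Fin d) ℂ) (hP : P * P = P) :
    (P * X * P).trace = (X * P).trace := by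
  rw [Matrix.trace_mul_comm (P * X) P, ← mul_assoc, hP, Matrix.trace_mul_comm]

lemma psd_trace_re_eq {M : Matrix (Fin d) (Fin d) ℂ} (hM : 0 ≤ M.trace) :
    M.trace = (M.trace.re : ℂ) := by
  rw [Complex.le_def] at hM
  apply Complex.ext
  · rfl
  · simp [← hM.2]

lemma gm_arith (ε t a u f : ℝ) (hε : 0 ≤ ε) (htpos : 0 < t) (ht1 : t ≤ 1)
    (hacc : 1 - ε ≤ t) (ha0 : 0 ≤ a) (ha1 : a ≤ 1) (hu0 : 0 ≤ u) (hut : u ≤ t)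
    (hft : t ≤ f)
    (hfb : f ≤ Real.sqrt a * Real.sqrt u + Real.sqrt (1-a) * Real.sqrt (t-u)) :
    a - t⁻¹ * u ≤ Real.sqrt ε := by
  set b := u / t with hb
  have hb0 : 0 ≤ b := div_nonneg hu0 htpos.le
  have hb1 : b ≤ 1 := (div_le_one htpos).mpr hut
  have hu_eq : u = t * b := by rw [hb]; field_simp
  have hsqrt_u : Real.sqrt u = Real.sqrt t * Real.sqrt b := by
    rw [hu_eq, Real.sqrt_mul htpos.le]
  have htu : t - u = t * (1 - b) := by rw [hu_eq]; ring
  have hsqrt_tu : Real.sqrt (t-u) = Real.sqrt t * Real.sqrt (1-b) := by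
    rw [htu, Real.sqrt_mul htpos.le]
  set F := Real.sqrt a * Real.sqrt b + Real.sqrt (1-a) * Real.sqrt (1-b) with hF
  have hfb' : f ≤ Real.sqrt t * F := by
    rw [hsqrt_u, hsqrt_tu] at hfb
    have he : Real.sqrt a * (Real.sqrt t * Real.sqrt b)
        + Real.sqrt (1-a) * (Real.sqrt t * Real.sqrt (1-b)) = Real.sqrt t * F := by
      rw [hF]; ring
    linarith [hfb, he.le, he.ge]
  have hstpos : 0 < Real.sqrt t := Real.sqrt_pos.mpr htpos
  have h2 : Real.sqrt t * Real.sqrt t = t := Real.mul_self_sqrt htpos.le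
  have hst : Real.sqrt t ≤ F := by
    have : Real.sqrt t * Real.sqrt t ≤ Real.sqrt t * F := by rw [h2]; linarith
    exact (mul_le_mul_iff_right₀ hstpos).mp this
  have hF2 : F^2 ≤ 1 - (a-b)^2 := by
    have e1 : Real.sqrt a ^ 2 = a := Real.sq_sqrt ha0
    have e2 : Real.sqrt b ^ 2 = b := Real.sq_sqrt hb0
    have e3 : Real.sqrt (1-a) ^ 2 = 1 - a := Real.sq_sqrt (by linarith)
    have e4 : Real.sqrt (1-b) ^ 2 = 1 - b := Real.sq_sqrt (by linarith)
    have hnn := sq_nonneg (Real.sqrt a * Real.sqrt (1-a) - Real.sqrt b * Real.sqrt (1-b))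
    rw [hF]
    nlinarith [hnn, e1, e2, e3, e4, Real.sqrt_nonneg a, Real.sqrt_nonneg b,
      Real.sqrt_nonneg (1-a), Real.sqrt_nonneg (1-b)]
  have htF : t ≤ F^2 := by
    have h3 := mul_self_le_mul_self hstpos.le hst
    have h4 : F * F = F^2 := (sq F).symm
    linarith
  have habs : (a - b)^2 ≤ ε := by linarith
  have hab : a - b ≤ Real.sqrt ε :=
    calc a - b ≤ |a - b| := le_abs_self _
    _ = Real.sqrt ((a-b)^2) := (Real.sqrt_sq_eq_abs _).symm
    _ ≤ Real.sqrt ε := Real.sqrt_le_sqrt habs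
  have : t⁻¹ * u = b := by rw [hb]; field_simp
  rw [this]
  exact hab

/-- Gentle measurement lemma: if `0 ≤ E ≤ I` and `Tr(Eρ) ≥ 1 − ε`, then the
post-measurement state `ρ' = √E ρ √E / Tr(Eρ)` satisfies `‖ρ − ρ'‖₁ ≤ 2√ε`. -/
theorem gentle_measurement {d : ℕ} (ρ E : Matrix (Fin d) (Fin d) ℂ)
    (hρ : ρ.PosSemidef) (hρtr : ρ.trace = 1)
    (hE : E.PosSemidef) (hEI : ((1 : Matrix (Fin d) (Fin d) ℂ) - E).PosSemidef)
    (ε : ℝ) (hε : 0 ≤ ε) (hacc : 1 - ε ≤ (E * ρ).trace.re) :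
    ∀ S : Matrix (Fin d) (Fin d) ℂ, S.PosSemidef → S * S = E →
      traceNorm (ρ - ((E * ρ).trace)⁻¹ • (S * ρ * S)) ≤ 2 * Real.sqrt ε := by
  intro S hS hSE
  set t : ℝ := (E * ρ).trace.re with ht_def
  have htnn : 0 ≤ (E * ρ).trace := trace_mul_nonneg hE hρ
  have ht' : (E * ρ).trace = (t : ℂ) := psd_trace_re_eq htnn
  have ht0 : 0 ≤ t := by
    rw [Complex.le_def] at htnn; exact htnn.1
  -- t ≤ 1
  have ht1 : t ≤ 1 := by
    have h0 := re_trace_mul_nonneg hEI hρ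
    have : ((1 - E) * ρ).trace = ρ.trace - (E * ρ).trace := by
      rw [sub_mul, one_mul, Matrix.trace_sub]
    rw [this, hρtr, ht'] at h0
    have : (1 - (t:ℂ)).re = 1 - t := by simp
    rw [this] at h0
    linarith
  rcases eq_or_lt_of_le ht0 with htz | htpos
  · -- t = 0 : then trace(Eρ) = 0 and ε ≥ 1
    have hz : (E * ρ).trace = 0 := by rw [ht', ← htz]; simp
    rw [hz]
    simp only [_root_.inv_zero, zero_smul, sub_zero]
    rw [traceNorm_psd hρ, hρtr]
    have hε1 : 1 ≤ ε := by rw [← htz] at hacc; linarith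
    have : (1:ℝ) ≤ Real.sqrt ε := by
      rw [show (1:ℝ) = Real.sqrt 1 by simp]
      exact Real.sqrt_le_sqrt hε1
    norm_num
    linarith
  · -- main case : 0 < t
    -- Spectral analysis of S
    have hSh := hS.1
    set W : Matrix (Fin d) (Fin d) ℂ := (hSh.eigenvectorUnitary : Matrix (Fin d) (Fin d) ℂ)
      with hW_def
    have hW1 : star W * W = 1 := star_mul_self_unitary hSh.eigenvectorUnitary.2
    have hW2 : W * star W = 1 := Matrix.mem_unitaryGroup_iff.mp hSh.eigenvectorUnitary.2
    set s : Fin d → ℝ := hSh.eigenvalues with hs_def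
    have hs0 : ∀ i, 0 ≤ s i := fun i => hS.eigenvalues_nonneg i
    have hSspec : S = W * diagonal (fun i => (s i : ℂ)) * star W := spectral' hSh
    have hEspec : E = W * diagonal (fun i => ((s i * s i : ℝ) : ℂ)) * star W := by
      rw [← hSE]
      conv_lhs => rw [hSspec]
      rw [conj_mul_conj hW1]
      have : (fun i => (s i : ℂ)) * (fun i => (s i : ℂ)) = fun i => ((s i * s i : ℝ) : ℂ) := by
        funext i; push_cast; rfl
      rw [this]
    have hs1 : ∀ i, s i ≤ 1 := by
      intro i
      have hps := hEI.mul_mul_conjTranspose_same (star W)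
      rw [Matrix.star_eq_conjTranspose, Matrix.conjTranspose_conjTranspose] at hps
      have hdd : star W * (1 - E) * W = diagonal (fun i => ((1 - s i * s i : ℝ) : ℂ)) := by
        rw [mul_sub, sub_mul, mul_one, hW1, hEspec,
          show star W * (W * diagonal (fun i => ((s i * s i : ℝ) : ℂ)) * star W) * W
            = (star W * W) * diagonal (fun i => ((s i * s i : ℝ) : ℂ)) * (star W * W) by
              noncomm_ring, hW1, one_mul, mul_one,
          show (1 : Matrix (Fin d) (Fin d) ℂ) = diagonal (fun _ => (1:ℂ)) by simp,
          Matrix.diagonal_sub]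
        congr 1
        funext j
        push_cast
        ring
      rw [Matrix.star_eq_conjTranspose] at hdd
      rw [hdd] at hps
      have := Matrix.posSemidef_diagonal_iff.mp hps i
      rw [Complex.le_def] at this
      simp only [Complex.ofReal_re, Complex.zero_re] at this
      nlinarith [hs0 i, this.1]
    have hSme : (S - E).PosSemidef := by
      have hform : S - E = W * diagonal (fun i => ((s i - s i * s i : ℝ) : ℂ)) * star W := by
        conv_lhs => rw [hSspec, hEspec]
        rw [show W * diagonal (fun i => (s i : ℂ)) * star W
              - W * diagonal (fun i => ((s i * s i : ℝ) : ℂ)) * star W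
            = W * (diagonal (fun i => (s i : ℂ))
              - diagonal (fun i => ((s i * s i : ℝ) : ℂ))) * star W by noncomm_ring,
          Matrix.diagonal_sub]
        congr 1
        funext j
        push_cast
        ring
      rw [hform]
      exact conj_psd (fun i => by nlinarith [hs0 i, hs1 i])
    -- basic trace facts
    have hSρS_tr : (S * ρ * S).trace = (E * ρ).trace := by
      rw [Matrix.trace_mul_comm (S * ρ) S, ← mul_assoc, hSE]
    have hf : t ≤ ((ρ * S).trace).re := by
      have h0 := re_trace_mul_nonneg hSme hρ
      have : ((S - E) * ρ).trace = (ρ * S).trace - (E * ρ).trace := by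
        rw [sub_mul, Matrix.trace_sub, Matrix.trace_mul_comm]
      rw [this, Complex.sub_re, ht'] at h0
      simp only [Complex.ofReal_re] at h0
      linarith
    -- the difference matrix
    rw [ht']
    have htne : ((t : ℝ) : ℂ) ≠ 0 := by
      simp only [ne_eq, Complex.ofReal_eq_zero]
      linarith
    set Δ : Matrix (Fin d) (Fin d) ℂ := ρ - ((t : ℝ) : ℂ)⁻¹ • (S * ρ * S) with hΔ_def
    have hSρS : (S * ρ * S).PosSemidef := by
      have := hρ.mul_mul_conjTranspose_same S
      rwa [hS.1.eq] at this
    have hΔh : Δ.IsHermitian := by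
      apply Matrix.IsHermitian.sub hρ.1
      rw [Matrix.IsHermitian, Matrix.conjTranspose_smul]
      rw [show (star (((t : ℝ) : ℂ)⁻¹) : ℂ) = ((t : ℝ) : ℂ)⁻¹ by
        rw [Complex.star_def, ← Complex.ofReal_inv, Complex.conj_ofReal]]
      rw [hSρS.1.eq]
    have hΔtr : Δ.trace = 0 := by
      rw [hΔ_def, Matrix.trace_sub, Matrix.trace_smul, hρtr, hSρS_tr, ht', smul_eq_mul,
        inv_mul_cancel₀ htne, sub_self]
    -- spectral analysis of Δ
    set V : Matrix (Fin d) (Fin d) ℂ := (hΔh.eigenvectorUnitary : Matrix (Fin d) (Fin d) ℂ)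
      with hV_def
    have hV1 : star V * V = 1 := star_mul_self_unitary hΔh.eigenvectorUnitary.2
    have hV2 : V * star V = 1 := Matrix.mem_unitaryGroup_iff.mp hΔh.eigenvectorUnitary.2
    set μ : Fin d → ℝ := hΔh.eigenvalues with hμ_def
    have hΔspec : Δ = V * diagonal (fun i => (μ i : ℂ)) * star V := spectral' hΔh
    have hμ0 : ∑ i, μ i = 0 := by
      have h1 : Δ.trace = ∑ i, ((μ i : ℝ) : ℂ) := by
        conv_lhs => rw [hΔspec]
        rw [trace_conj hV1]
      rw [hΔtr] at h1
      exact_mod_cast h1.symm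
    -- the projection onto the positive part
    set g : Fin d → ℝ := fun i => if 0 < μ i then 1 else 0 with hg_def
    have hg01 : ∀ i, 0 ≤ g i ∧ g i ≤ 1 := by
      intro i; constructor <;> · rw [hg_def]; dsimp only; split <;> norm_num
    set P : Matrix (Fin d) (Fin d) ℂ := V * diagonal (fun i => (g i : ℂ)) * star V with hP_def
    have hP_psd : P.PosSemidef := conj_psd (fun i => (hg01 i).1)
    have hP_herm : P.IsHermitian := conj_herm g
    have hP_idem : P * P = P := by
      rw [hP_def, conj_mul_conj hV1]
      congr 1
      rw [show (fun i => (g i : ℂ)) * (fun i => (g i : ℂ)) = fun i => (g i : ℂ) by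
        funext i
        show ((g i : ℂ)) * (g i : ℂ) = (g i : ℂ)
        rw [hg_def]; dsimp only; split <;> norm_num]
    have hQ_form : (1 : Matrix (Fin d) (Fin d) ℂ) - P
        = V * diagonal (fun i => ((1 - g i : ℝ) : ℂ)) * star V := by
      have h1 : (fun i => ((1 - g i : ℝ) : ℂ))
          = fun i => (1:ℂ) - (g i : ℂ) := by
        funext i
        push_cast
        ring
      rw [h1, ← Matrix.diagonal_sub (fun _ => (1:ℂ)) (fun i => (g i : ℂ)), Matrix.diagonal_one,
        show V * ((1 : Matrix (Fin d) (Fin d) ℂ) - diagonal (fun i => (g i : ℂ))) * star V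
          = V * star V - V * diagonal (fun i => (g i : ℂ)) * star V by noncomm_ring,
        hV2, hP_def]
    have hQ_psd : ((1 : Matrix (Fin d) (Fin d) ℂ) - P).PosSemidef := by
      rw [hQ_form]
      exact conj_psd (fun i => by linarith [(hg01 i).2])
    have hQ_herm : ((1 : Matrix (Fin d) (Fin d) ℂ) - P).IsHermitian := hQ_psd.1
    have hQ_idem : ((1 : Matrix (Fin d) (Fin d) ℂ) - P) * (1 - P) = 1 - P := by
      calc ((1 : Matrix (Fin d) (Fin d) ℂ) - P) * (1 - P)
          = 1 - P - (P - P * P) := by noncomm_ring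
        _ = 1 - P := by rw [hP_idem]; simp
    -- trace norm of Δ via its eigenvalues
    have hTN : traceNorm Δ = ∑ i, |μ i| := traceNorm_herm hΔh
    -- trace of P * Δ
    have hPΔ_spec : ((P * Δ).trace).re = ∑ i, g i * μ i := by
      have h2 : P * Δ = V * diagonal ((fun i => (g i : ℂ)) * (fun i => (μ i : ℂ))) * star V := by
        rw [hP_def]
        conv_lhs => rw [hΔspec]
        exact conj_mul_conj hV1 _ _
      rw [h2, trace_conj hV1, Complex.re_sum]
      apply Finset.sum_congr rfl
      intro i _
      show ((g i : ℂ) * (μ i : ℂ)).re = g i * μ i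
      rw [← Complex.ofReal_mul, Complex.ofReal_re]
    have hgμ : ∑ i, g i * μ i = (∑ i, |μ i|) / 2 := by
      have h3 : ∑ i, |μ i| = ∑ i, (2 * (g i * μ i) - μ i) := by
        apply Finset.sum_congr rfl
        intro i _
        rw [hg_def]
        dsimp only
        split
        · next h => rw [abs_of_pos h]; ring
        · next h => rw [abs_of_nonpos (le_of_not_gt h)]; ring
      rw [Finset.sum_sub_distrib] at h3
      rw [hμ0, sub_zero] at h3
      rw [← Finset.mul_sum] at h3
      linarith
    -- express trace of P * Δ using a and u
    set a : ℝ := ((ρ * P).trace).re with ha_def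
    set u : ℝ := (((S * ρ * S) * P).trace).re with hu_def
    have hPΔ_au : ((P * Δ).trace).re = a - t⁻¹ * u := by
      rw [Matrix.trace_mul_comm, hΔ_def, sub_mul, smul_mul_assoc, Matrix.trace_sub,
        Matrix.trace_smul, Complex.sub_re, smul_eq_mul, ← Complex.ofReal_inv,
        Complex.re_ofReal_mul]
    -- bounds on a and u
    have ha0 : 0 ≤ a := re_trace_mul_nonneg hρ hP_psd
    have hu0 : 0 ≤ u := re_trace_mul_nonneg hSρS hP_psd
    have hρQ : ((ρ * (1 - P)).trace).re = 1 - a := by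
      rw [mul_sub, mul_one, Matrix.trace_sub, hρtr, Complex.sub_re, Complex.one_re]
    have hSQ : (((S * ρ * S) * (1 - P)).trace).re = t - u := by
      rw [mul_sub, mul_one, Matrix.trace_sub, hSρS_tr, ht', Complex.sub_re, Complex.ofReal_re]
    have ha1 : a ≤ 1 := by
      have h0 := re_trace_mul_nonneg hρ hQ_psd
      rw [hρQ] at h0
      linarith
    have hut : u ≤ t := by
      have h0 := re_trace_mul_nonneg hSρS hQ_psd
      rw [hSQ] at h0
      linarith
    -- Cauchy-Schwarz step
    set R : Matrix (Fin d) (Fin d) ℂ := CFC.sqrt ρ with hR_def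
    have hRR : R * R = ρ := CFC.sqrt_mul_sqrt_self ρ hρ.nonneg
    have hRh : R.IsHermitian := (Matrix.nonneg_iff_posSemidef.mp (CFC.sqrt_nonneg ρ)).1
    have key : ∀ P' : Matrix (Fin d) (Fin d) ℂ, P'.IsHermitian → P' * P' = P' →
        ((ρ * S * P').trace).re ≤
          Real.sqrt (((ρ * P').trace).re) * Real.sqrt ((((S * ρ * S) * P').trace).re) := by
      intro P' hP'h hP'i
      have hA : (R * P')ᴴ * (R * P') = P' * ρ * P' := by
        rw [Matrix.conjTranspose_mul, hRh.eq, hP'h.eq]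
        calc P' * R * (R * P') = P' * (R * R) * P' := by noncomm_ring
          _ = P' * ρ * P' := by rw [hRR]
      have hB : (R * (S * P'))ᴴ * (R * (S * P')) = P' * (S * ρ * S) * P' := by
        rw [Matrix.conjTranspose_mul, Matrix.conjTranspose_mul, hRh.eq, hP'h.eq, hS.1.eq]
        calc P' * S * R * (R * (S * P')) = P' * (S * (R * R) * S) * P' := by noncomm_ring
          _ = P' * (S * ρ * S) * P' := by rw [hRR]
      have hAB : (R * P')ᴴ * (R * (S * P')) = P' * (ρ * S) * P' := by
        rw [Matrix.conjTranspose_mul, hRh.eq, hP'h.eq]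
        calc P' * R * (R * (S * P')) = P' * (R * R * S) * P' := by noncomm_ring
          _ = P' * (ρ * S) * P' := by rw [hRR]
      have cs := trace_cauchy_schwarz (R * P') (R * (S * P'))
      rw [hA, hB, hAB] at cs
      rw [trace_PXP P' (ρ * S) hP'i, trace_PXP P' ρ hP'i, trace_PXP P' (S * ρ * S) hP'i] at cs
      calc ((ρ * S * P').trace).re ≤ ‖(ρ * S * P').trace‖ := Complex.re_le_norm _
        _ ≤ _ := cs
    -- splitting Tr(ρ S)
    have hsplit : ((ρ * S).trace).re
        = ((ρ * S * P).trace).re + ((ρ * S * (1 - P)).trace).re := by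
      have hdec : ρ * S = ρ * S * P + ρ * S * (1 - P) := by noncomm_ring
      conv_lhs => rw [hdec]
      rw [Matrix.trace_add, Complex.add_re]
    have hfb : ((ρ * S).trace).re
        ≤ Real.sqrt a * Real.sqrt u + Real.sqrt (1-a) * Real.sqrt (t-u) := by
      have k1 := key P hP_herm hP_idem
      have k2 := key (1 - P) hQ_herm hQ_idem
      rw [hρQ, hSQ] at k2
      rw [hsplit]
      exact add_le_add k1 k2
    have harith := gm_arith ε t a u (((ρ * S).trace).re) hε htpos ht1 hacc ha0 ha1 hu0 hut hf hfb
    rw [hTN]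
    have hfin : ∑ i, |μ i| = 2 * (a - t⁻¹ * u) := by
      rw [← hPΔ_au, hPΔ_spec, hgμ]
      ring
    rw [hfin]
    linarith [harith]
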